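/- arXiv:2005.00944 — 2 statements merged into one kernel-verified Lean document; each statement's English description precedes it below -/
import Mathlib

section
/- Fix integers k ≥ 1, d ≥ 1 and r ≥ k, data matrices X_i ∈ ℝ^{m_i×d} and label vectors y_i ∈ ℝ^{m_i} for i = 1,…,k, and set θ_i = (X_iᵀX_i)† X_iᵀ y_i ∈ ℝ^d. Then there exists a global minimizer (B*, A_1*, …, A_k*), over B ∈ ℝ^{d×r} and A_1,…,A_k ∈ ℝ^r, of the linear MTL objective f(A_1,…,A_k;B) = Σ_{i=1}^k ‖X_i B A_i − y_i‖², such that B* A_i* = θ_i for every i = 1,…,k. -/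
open Matrix BigOperators

/-- Euclidean norm of a vector in `ℝ^n`. -/
noncomputable def vnorm {n : ℕ} (v : Fin n → ℝ) : ℝ := Real.sqrt (∑ i, v i ^ 2)

/- Moore–Penrose pseudoinverse of a real matrix, characterized by the four Penrose
equations (which always have a unique solution). -/
open Classical in
noncomputable def pinv {m n : ℕ} (A : Matrix (Fin m) (Fin n) ℝ) : Matrix (Fin n) (Fin m) ℝ :=
  if h : ∃ B : Matrix (Fin n) (Fin m) ℝ,
      A * B * A = A ∧ B * A * B = B ∧ (A * B)ᵀ = A * B ∧ (B * A)ᵀ = B * A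
  then h.choose else 0



lemma conjT_eq {m n : ℕ} (A : Matrix (Fin m) (Fin n) ℝ) : Aᴴ = Aᵀ := by
  ext i j; simp [conjTranspose_apply]

lemma exists_penrose_hermitian {n : ℕ} {M : Matrix (Fin n) (Fin n) ℝ} (hM : M.IsHermitian) :
    ∃ B : Matrix (Fin n) (Fin n) ℝ,
      M * B * M = M ∧ B * M * B = B ∧ (M * B)ᵀ = M * B ∧ (B * M)ᵀ = B * M := by
  set U : Matrix (Fin n) (Fin n) ℝ := (hM.eigenvectorUnitary : Matrix (Fin n) (Fin n) ℝ) with hU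
  have hUU' : star U * U = 1 := (Matrix.mem_unitaryGroup_iff').mp hM.eigenvectorUnitary.2
  set d : Fin n → ℝ := hM.eigenvalues with hd
  set g : Fin n → ℝ := fun i => if d i = 0 then 0 else (d i)⁻¹ with hg
  have hspec : M = U * diagonal d * star U := by
    have := hM.spectral_theorem
    rwa [RCLike.ofReal_real_eq_id, Function.id_comp] at this
  have key : ∀ a b : Fin n → ℝ, (U * diagonal a * star U) * (U * diagonal b * star U)
      = U * diagonal (fun i => a i * b i) * star U := by
    intro a b
    calc (U * diagonal a * star U) * (U * diagonal b * star U)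
        = U * diagonal a * (star U * U) * diagonal b * star U := by
          simp only [Matrix.mul_assoc]
      _ = U * diagonal (fun i => a i * b i) * star U := by
          rw [hUU', Matrix.mul_one, Matrix.mul_assoc U, diagonal_mul_diagonal]
  have sym : ∀ a : Fin n → ℝ, (U * diagonal a * star U)ᵀ = U * diagonal a * star U := by
    intro a
    rw [← conjT_eq]
    simp only [Matrix.star_eq_conjTranspose, conjTranspose_mul, conjTranspose_conjTranspose,
      diagonal_conjTranspose]
    have ha : star a = a := star_trivial a
    rw [ha, Matrix.mul_assoc]
  have h1 : (fun i => d i * g i * d i) = d := by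
    funext i
    by_cases h : d i = 0
    · simp [hg, h]
    · simp only [hg, h, if_false]; field_simp
  have h2 : (fun i => g i * d i * g i) = g := by
    funext i
    by_cases h : d i = 0
    · simp [hg, h]
    · simp only [hg, h, if_false]; field_simp
  refine ⟨U * diagonal g * star U, ?_, ?_, ?_, ?_⟩
  · rw [hspec]; rw [key, key]
    simpa using congrArg (fun f => U * diagonal f * star U) h1
  · rw [hspec]; rw [key, key]
    simpa using congrArg (fun f => U * diagonal f * star U) h2
  · rw [hspec, key, sym]
  · rw [hspec, key, sym]

lemma pinv_penrose {m d : ℕ} (X : Matrix (Fin m) (Fin d) ℝ) :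
    (Xᵀ * X) * pinv (Xᵀ * X) * (Xᵀ * X) = Xᵀ * X ∧
    ((Xᵀ * X) * pinv (Xᵀ * X))ᵀ = (Xᵀ * X) * pinv (Xᵀ * X) := by
  have hM : (Xᵀ * X).IsHermitian := by
    have := Matrix.isHermitian_conjTranspose_mul_self X
    rwa [conjT_eq] at this
  have h : ∃ B : Matrix (Fin d) (Fin d) ℝ,
      (Xᵀ * X) * B * (Xᵀ * X) = Xᵀ * X ∧ B * (Xᵀ * X) * B = B ∧
      ((Xᵀ * X) * B)ᵀ = (Xᵀ * X) * B ∧ (B * (Xᵀ * X))ᵀ = B * (Xᵀ * X) :=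
    exists_penrose_hermitian hM
  unfold pinv
  rw [dif_pos h]
  exact ⟨h.choose_spec.1, h.choose_spec.2.2.1⟩

lemma normal_eq_aux {m d : ℕ} (X : Matrix (Fin m) (Fin d) ℝ)
    (M B : Matrix (Fin d) (Fin d) ℝ) (hMdef : M = Xᵀ * X)
    (h1 : M * B * M = M) : M * B * Xᵀ = Xᵀ := by
  have hMt : Mᵀ = M := by rw [hMdef, transpose_mul, transpose_transpose]
  have haux : (Mᵀ * B * Mᵀ)ᵀ = M * (Bᵀ * M) := by
    rw [transpose_mul, transpose_mul, transpose_transpose]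
  have hMBt : M * Bᵀ * M = M := by
    rw [Matrix.mul_assoc, ← haux, hMt, h1, hMt]
  have t21 : Xᵀ * (X * (Bᵀ * M)) = M := by
    simp only [← Matrix.mul_assoc]
    rw [← hMdef]
    exact hMBt
  have t12 : M * B * Xᵀ * X = M := by
    rw [Matrix.mul_assoc (M * B), ← hMdef]
    exact h1
  have t11 : M * B * Xᵀ * (X * (Bᵀ * M)) = M := by
    rw [Matrix.mul_assoc (M * B), t21]
    exact h1
  have hzero : (M * B * Xᵀ - Xᵀ) * (M * B * Xᵀ - Xᵀ)ᵀ = 0 := by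
    rw [transpose_sub, transpose_mul, transpose_mul, transpose_transpose, hMt]
    rw [Matrix.sub_mul, Matrix.mul_sub, Matrix.mul_sub]
    rw [t11, t12, t21, ← hMdef]
    simp
  have := Matrix.self_mul_conjTranspose_eq_zero.mp (by rwa [conjT_eq])
  exact sub_eq_zero.mp this

lemma normal_eq {m d : ℕ} (X : Matrix (Fin m) (Fin d) ℝ) :
    (Xᵀ * X) * pinv (Xᵀ * X) * Xᵀ = Xᵀ :=
  normal_eq_aux X _ _ rfl (pinv_penrose X).1

lemma least_squares {m d : ℕ} (X : Matrix (Fin m) (Fin d) ℝ) (y : Fin m → ℝ)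
    (w : Fin d → ℝ) :
    ∑ j, (X.mulVec ((pinv (Xᵀ * X) * Xᵀ).mulVec y) j - y j) ^ 2 ≤
      ∑ j, (X.mulVec w j - y j) ^ 2 := by
  set θ := (pinv (Xᵀ * X) * Xᵀ).mulVec y with hθdef
  set t : Fin m → ℝ := fun j => X.mulVec θ j - y j with ht
  set u : Fin m → ℝ := X.mulVec (w - θ) with hu
  have horth : Xᵀ.mulVec t = 0 := by
    have h1 : Xᵀ.mulVec t = (Xᵀ * X).mulVec θ - Xᵀ.mulVec y := by
      have h2 : t = X.mulVec θ - y := rfl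
      rw [h2, Matrix.mulVec_sub, Matrix.mulVec_mulVec]
    rw [h1, hθdef, Matrix.mulVec_mulVec, ← Matrix.mul_assoc, normal_eq X]
    simp
  have hcross : u ⬝ᵥ t = 0 := by
    rw [dotProduct_comm, hu, Matrix.dotProduct_mulVec]
    have hvm : t ᵥ* X = Xᵀ.mulVec t := by
      rw [← Matrix.vecMul_transpose, transpose_transpose]
    rw [hvm, horth]
    simp [dotProduct]
  have hdecomp : ∀ j, X.mulVec w j - y j = t j + u j := by
    intro j
    have h2 : u j = X.mulVec w j - X.mulVec θ j := by
      rw [hu, Matrix.mulVec_sub]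
      rfl
    have h3 : t j = X.mulVec θ j - y j := rfl
    rw [h2, h3]
    ring
  calc ∑ j, t j ^ 2 ≤ ∑ j, t j ^ 2 + (∑ j, u j ^ 2 + 2 * (u ⬝ᵥ t)) := by
        rw [hcross]
        have : (0:ℝ) ≤ ∑ j, u j ^ 2 := Finset.sum_nonneg fun j _ => sq_nonneg _
        linarith
    _ = ∑ j, (t j + u j) ^ 2 := by
        simp only [dotProduct, Finset.mul_sum, ← Finset.sum_add_distrib]
        apply Finset.sum_congr rfl
        intro j _
        ring
    _ = ∑ j, (X.mulVec w j - y j) ^ 2 := by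
        apply Finset.sum_congr rfl
        intro j _
        rw [hdecomp j]

lemma vnorm_sq {n : ℕ} (v : Fin n → ℝ) : vnorm v ^ 2 = ∑ i, v i ^ 2 :=
  Real.sq_sqrt (Finset.sum_nonneg fun i _ => sq_nonneg _)


/-- if the shared module capacity `r` is at least the number of tasks `k`,
then there is a global minimizer `(B, A₁, …, A_k)` of the linear MTL objective with
`B Aᵢ = θᵢ = (XᵢᵀXᵢ)† Xᵢᵀ yᵢ` for every task `i`. -/
theorem mtl_capacity_no_transfer
    (k d r : ℕ) (hk : 1 ≤ k) (hd : 1 ≤ d) (hr : k ≤ r)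
    (m : Fin k → ℕ)
    (X : ∀ i : Fin k, Matrix (Fin (m i)) (Fin d) ℝ)
    (y : ∀ i : Fin k, Fin (m i) → ℝ)
    (θ : Fin k → Fin d → ℝ)
    (hθ : ∀ i, θ i = (pinv ((X i)ᵀ * X i) * (X i)ᵀ).mulVec (y i)) :
    ∃ (B : Matrix (Fin d) (Fin r) ℝ) (A : Fin k → Fin r → ℝ),
      (∀ (B' : Matrix (Fin d) (Fin r) ℝ) (A' : Fin k → Fin r → ℝ),
        (∑ i, vnorm (fun j => (X i).mulVec (B.mulVec (A i)) j - y i j) ^ 2) ≤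
        (∑ i, vnorm (fun j => (X i).mulVec (B'.mulVec (A' i)) j - y i j) ^ 2)) ∧
      (∀ i, B.mulVec (A i) = θ i) := by
  classical
  refine ⟨fun p q => if h : (q : ℕ) < k then θ ⟨q, h⟩ p else 0,
    fun i q => if (q : ℕ) = (i : ℕ) then 1 else 0, ?_, ?_⟩
  case refine_2 =>
    intro i
    funext p
    show (∑ q : Fin r, (if h : (q : ℕ) < k then θ ⟨q, h⟩ p else 0) *
        (if (q : ℕ) = (i : ℕ) then 1 else 0)) = θ i p
    rw [Finset.sum_eq_single (Fin.castLE hr i)]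
    · simp [Fin.castLE, i.2]
    · intro q _ hq
      have : (q : ℕ) ≠ (i : ℕ) := fun h => hq (Fin.ext (by simpa [Fin.castLE] using h))
      simp [this]
    · simp
  case refine_1 =>
    intro B' A'
    have hmin : ∀ i : Fin k, (fun p : Fin d => ∑ q : Fin r, (if h : (q : ℕ) < k then θ ⟨q, h⟩ p else 0) *
        (if (q : ℕ) = (i : ℕ) then 1 else 0)) = θ i := by
      intro i
      funext p
      rw [Finset.sum_eq_single (Fin.castLE hr i)]
      · simp [Fin.castLE, i.2]
      · intro q _ hq
        have : (q : ℕ) ≠ (i : ℕ) := fun h => hq (Fin.ext (by simpa [Fin.castLE] using h))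
        simp [this]
      · simp
    apply Finset.sum_le_sum
    intro i _
    rw [vnorm_sq, vnorm_sq]
    have hB : Matrix.mulVec (fun (p : Fin d) (q : Fin r) => if h : (q : ℕ) < k then θ ⟨q, h⟩ p else 0)
        (fun q : Fin r => if (q : ℕ) = (i : ℕ) then 1 else 0) = θ i := hmin i
    rw [hB, hθ i]
    exact least_squares (X i) (y i) (B'.mulVec (A' i))
end

section
/- Let k ≥ 1, r ≤ d, and suppose the data matrices X_i ∈ ℝ^{m_i×d} of k tasks all satisfy X_iᵀX_i = Σ for a fixed positive definite Σ ∈ ℝ^{d×d} with eigendecomposition Σ = V D Vᵀ (V ∈ ℝ^{d×d} orthogonal, D diagonal with positive entries). Let y_i ∈ ℝ^{m_i}, let α_1,…,α_k > 0, set U_i = X_i V D^{-1/2} (which has orthonormal columns) and M = Σ_{i=1}^k α_i U_iᵀ y_i y_iᵀ U_i ∈ ℝ^{d×d}. Let C* ∈ ℝ^{d×r} have orthonormal columns maximizing tr(CᵀMC) over all C ∈ ℝ^{d×r} with orthonormal columns, and set B* = V D^{-1/2} C*. Then there exist A_1*,…,A_k* ∈ ℝ^r such that (B*, A_1*, …,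 A_k*) is a global minimizer, over B ∈ ℝ^{d×r} and A_i ∈ ℝ^r, of the reweighted MTL objective Σ_{i=1}^k α_i ‖X_i B A_i − y_i‖². -/
open Matrix BigOperators

lemma exists_proj (d r : ℕ) (hrd : r ≤ d) (G : Matrix (Fin d) (Fin r) ℝ) :
    ∃ C' : Matrix (Fin d) (Fin r) ℝ, C'ᵀ * C' = 1 ∧ C' * (C'ᵀ * G) = G := by
  classical
  set E := EuclideanSpace ℝ (Fin d)
  set g : Fin r → E := fun q => WithLp.toLp 2 (fun p => G p q) with hg
  set W : Submodule ℝ E := Submodule.span ℝ (Set.range g) with hW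
  have hWfin : Module.finrank ℝ W ≤ r := by
    have := finrank_range_le_card (R := ℝ) g
    simpa [Set.finrank] using this
  set t := Module.finrank ℝ W with ht
  have htr : t ≤ r := hWfin
  have htd : t ≤ d := le_trans htr hrd
  set bw := stdOrthonormalBasis ℝ W with hbw
  set v : Fin d → E := fun j => if h : (j : ℕ) < t then (bw ⟨j, h⟩ : E) else 0 with hv
  set s : Set (Fin d) := {j | (j : ℕ) < t} with hs
  have hvon : Orthonormal ℝ (s.restrict v) := by
    rw [orthonormal_iff_ite]
    intro i j
    have hi : ((i : Fin d) : ℕ) < t := i.2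
    have hj : ((j : Fin d) : ℕ) < t := j.2
    simp only [Set.restrict_apply, hv, dif_pos hi, dif_pos hj]
    change inner ℝ (if h : ((i : Fin d) : ℕ) < t then (bw ⟨_, h⟩ : E) else 0)
      (if h : ((j : Fin d) : ℕ) < t then (bw ⟨_, h⟩ : E) else 0) = _
    rw [dif_pos hi, dif_pos hj]
    rw [← Submodule.coe_inner]
    rw [orthonormal_iff_ite.mp bw.orthonormal]
    by_cases h : i = j
    · simp [h]
    · have hne : (⟨((i : Fin d) : ℕ), hi⟩ : Fin t) ≠ ⟨((j : Fin d) : ℕ), hj⟩ := by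
        intro hcon
        apply h
        exact Subtype.ext (Fin.ext (Fin.mk_eq_mk.mp hcon))
      simp [hne, h]
  have hcard : Module.finrank ℝ E = Fintype.card (Fin d) := by simp [E]
  obtain ⟨b, hb⟩ := hvon.exists_orthonormalBasis_extension_of_card_eq hcard
  set f : Fin r → E := fun q => b (Fin.castLE hrd q) with hf
  have hfon : Orthonormal ℝ f := b.orthonormal.comp _ (Fin.castLE_injective hrd)
  have hbwf : ∀ j : Fin t, (bw j : E) = f (Fin.castLE htr j) := by
    intro j
    have hjs : (Fin.castLE hrd (Fin.castLE htr j)) ∈ s := by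
      simpa [hs] using j.2
    have hbv := hb _ hjs
    show (bw j : E) = b (Fin.castLE hrd (Fin.castLE htr j))
    rw [hbv, hv]
    have hlt : ((Fin.castLE hrd (Fin.castLE htr j) : Fin d) : ℕ) < t := j.2
    simp only [dif_pos hlt]
    exact congrArg _ (congrArg bw (Fin.ext rfl))
  have hspan : ∀ x : E, x ∈ W → x ∈ Submodule.span ℝ (Set.range f) := by
    intro x hx
    have hsum := bw.sum_repr ⟨x, hx⟩
    have hsum2 : x = ∑ j : Fin t, (bw.repr ⟨x, hx⟩ j) • (bw j : E) := by
      have := congrArg (Subtype.val) hsum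
      simp only [Submodule.coe_sum, Submodule.coe_smul] at this
      exact this.symm
    rw [hsum2]
    refine Submodule.sum_mem _ fun j _ => Submodule.smul_mem _ _ ?_
    rw [hbwf j]
    exact Submodule.subset_span (Set.mem_range_self _)
  have hginspan : ∀ q, (g q) ∈ Submodule.span ℝ (Set.range f) :=
    fun q => hspan _ (Submodule.subset_span (Set.mem_range_self q))
  have hinner : ∀ (x z : E), (inner ℝ x z : ℝ) = ∑ p, x p * z p := by
    intro x z
    rw [PiLp.inner_apply]
    simp [RCLike.inner_apply, mul_comm]
  refine ⟨Matrix.of fun p q => f q p, ?_, ?_⟩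
  · ext i j
    have := orthonormal_iff_ite.mp hfon i j
    rw [hinner (f i) (f j)] at this
    simp only [Matrix.mul_apply, Matrix.transpose_apply, Matrix.of_apply]
    rw [this]
    by_cases h : i = j <;> simp [h, Matrix.one_apply]
  · ext p q
    obtain ⟨c, hc⟩ := (Submodule.mem_span_range_iff_exists_fun ℝ).mp (hginspan q)
    have hcoef : ∀ j, (∑ p', f j p' * G p' q) = c j := by
      intro j
      have h1 := hfon.inner_right_fintype c j
      rw [hc] at h1
      rw [← h1, hinner (f j) (g q)]
    have h2 : (∑ j, c j • f j) p = G p q := by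
      rw [hc]
    have h3 : (∑ j, c j • f j) p = ∑ j, c j * f j p := by
      rw [WithLp.ofLp_sum, Finset.sum_apply]
      rfl
    simp only [Matrix.mul_apply, Matrix.transpose_apply, Matrix.of_apply]
    calc ∑ j, f j p * ∑ p', f j p' * G p' q
        = ∑ j, c j * f j p := by
          refine Finset.sum_congr rfl fun j _ => ?_
          rw [hcoef j, mul_comm]
      _ = G p q := by rw [← h3, h2]

lemma mulVec_dot_right {m n : Type*} [Fintype m] [Fintype n]
    (C : Matrix m n ℝ) (a : n → ℝ) (z : m → ℝ) :
    (C.mulVec a) ⬝ᵥ z = a ⬝ᵥ (Cᵀ.mulVec z) := by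
  rw [dotProduct_comm, Matrix.dotProduct_mulVec, ← Matrix.mulVec_transpose,
    dotProduct_comm]

lemma orth_dot {m n : Type*} [Fintype m] [Fintype n] [DecidableEq n]
    (C : Matrix m n ℝ) (hC : Cᵀ * C = 1) (a : n → ℝ) :
    (C.mulVec a) ⬝ᵥ (C.mulVec a) = a ⬝ᵥ a := by
  rw [mulVec_dot_right, Matrix.mulVec_mulVec, hC, Matrix.one_mulVec]

lemma sq_expand {m n : Type*} [Fintype m] [Fintype n] [DecidableEq n]
    (U : Matrix m n ℝ) (hU : Uᵀ * U = 1) (y : m → ℝ) (w : n → ℝ) :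
    ∑ p, ((U.mulVec w) p - y p) ^ 2
      = w ⬝ᵥ w - 2 * (w ⬝ᵥ (Uᵀ.mulVec y)) + ∑ p, y p ^ 2 := by
  have h1 : (U.mulVec w) ⬝ᵥ (U.mulVec w) = w ⬝ᵥ w := orth_dot U hU w
  have h2 : (U.mulVec w) ⬝ᵥ y = w ⬝ᵥ (Uᵀ.mulVec y) := mulVec_dot_right U w y
  calc ∑ p, ((U.mulVec w) p - y p) ^ 2
      = ∑ p, ((U.mulVec w) p * (U.mulVec w) p - 2 * ((U.mulVec w) p * y p) + y p ^ 2) := by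
        refine Finset.sum_congr rfl fun p _ => by ring
    _ = (U.mulVec w) ⬝ᵥ (U.mulVec w) - 2 * ((U.mulVec w) ⬝ᵥ y) + ∑ p, y p ^ 2 := by
        rw [Finset.sum_add_distrib, Finset.sum_sub_distrib, ← Finset.mul_sum]
        rfl
    _ = w ⬝ᵥ w - 2 * (w ⬝ᵥ (Uᵀ.mulVec y)) + ∑ p, y p ^ 2 := by rw [h1, h2]

lemma conj_vecMulVec {n r : Type*} [Fintype n] [Fintype r]
    (C : Matrix n r ℝ) (b : n → ℝ) :
    Cᵀ * Matrix.vecMulVec b b * C = Matrix.vecMulVec (Cᵀ.mulVec b) (Cᵀ.mulVec b) := by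
  ext i j
  have hc : ∀ l, Cᵀ.mulVec b l = ∑ p, C p l * b p := by
    intro l
    simp [Matrix.mulVec, dotProduct, Matrix.transpose_apply]
  rw [Matrix.vecMulVec_apply, hc i, hc j, Finset.sum_mul_sum]
  simp only [Matrix.mul_apply, Matrix.vecMulVec_apply, Matrix.transpose_apply]
  simp only [Finset.sum_mul]
  rw [Finset.sum_comm]
  refine Finset.sum_congr rfl fun p _ => Finset.sum_congr rfl fun q _ => by ring

lemma trace_vecMulVec' {n : Type*} [Fintype n] (u v : n → ℝ) :
    (Matrix.vecMulVec u v).trace = u ⬝ᵥ v := by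
  simp [Matrix.trace, Matrix.diag, Matrix.vecMulVec_apply, dotProduct]

lemma sum_sq_nonneg_dot {r : Type*} [Fintype r] (u c : r → ℝ) :
    c ⬝ᵥ c - 2 * (u ⬝ᵥ c) + u ⬝ᵥ u ≥ 0 := by
  have : (0:ℝ) ≤ ∑ j, (u j - c j) ^ 2 := Finset.sum_nonneg fun j _ => sq_nonneg _
  calc (0:ℝ) ≤ ∑ j, (u j - c j) ^ 2 := this
    _ = c ⬝ᵥ c - 2 * (u ⬝ᵥ c) + u ⬝ᵥ u := by
        simp only [dotProduct, Finset.mul_sum, ← Finset.sum_add_distrib,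
          ← Finset.sum_sub_distrib]
        refine Finset.sum_congr rfl fun j _ => by ring

/-- Proposition: equal task covariances: if all tasks share the same
covariance `XᵢᵀXᵢ = Σ = V D Vᵀ`, `Uᵢ = Xᵢ V D^{-1/2}`, `M = Σᵢ αᵢ Uᵢᵀ yᵢ yᵢᵀ Uᵢ`, and
`C⋆` maximizes `tr(Cᵀ M C)` over matrices with `r` orthonormal columns, then
`B⋆ = V D^{-1/2} C⋆` (with suitable heads `Aᵢ⋆`) is a global minimizer of the
reweighted MTL objective. -/
theorem equal_covariance_mtl_optimum
    (k d r : ℕ) (hk : 1 ≤ k) (hrd : r ≤ d)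
    (m : Fin k → ℕ)
    (X : ∀ i : Fin k, Matrix (Fin (m i)) (Fin d) ℝ)
    (S : Matrix (Fin d) (Fin d) ℝ) (hS : ∀ i, (X i)ᵀ * X i = S) (hSpd : S.PosDef)
    (V : Matrix (Fin d) (Fin d) ℝ) (hV : Vᵀ * V = 1)
    (Ddiag : Fin d → ℝ) (hD : ∀ j, 0 < Ddiag j)
    (hSdec : S = V * Matrix.diagonal Ddiag * Vᵀ)
    (y : ∀ i : Fin k, Fin (m i) → ℝ) (α : Fin k → ℝ) (hα : ∀ i, 0 < α i)
    (U : ∀ i : Fin k, Matrix (Fin (m i)) (Fin d) ℝ)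
    (hU : ∀ i, U i = X i * V * Matrix.diagonal (fun j => (Real.sqrt (Ddiag j))⁻¹))
    (M : Matrix (Fin d) (Fin d) ℝ)
    (hM : M = ∑ i, α i • ((U i)ᵀ * Matrix.vecMulVec (y i) (y i) * U i))
    (C : Matrix (Fin d) (Fin r) ℝ) (hC : Cᵀ * C = 1)
    (hCmax : ∀ C' : Matrix (Fin d) (Fin r) ℝ, C'ᵀ * C' = 1 →
      (C'ᵀ * M * C').trace ≤ (Cᵀ * M * C).trace)
    (B : Matrix (Fin d) (Fin r) ℝ)
    (hB : B = V * Matrix.diagonal (fun j => (Real.sqrt (Ddiag j))⁻¹) * C) :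
    ∃ A : Fin k → Fin r → ℝ,
      ∀ (B' : Matrix (Fin d) (Fin r) ℝ) (A' : Fin k → Fin r → ℝ),
        (∑ i, α i * vnorm (fun j => (X i).mulVec (B.mulVec (A i)) j - y i j) ^ 2) ≤
        (∑ i, α i * vnorm (fun j => (X i).mulVec (B'.mulVec (A' i)) j - y i j) ^ 2) := by
  classical
  have hVVt : V * Vᵀ = 1 := mul_eq_one_comm.mp hV
  set Dh : Matrix (Fin d) (Fin d) ℝ := Matrix.diagonal (fun j => Real.sqrt (Ddiag j)) with hDh
  set Di : Matrix (Fin d) (Fin d) ℝ := Matrix.diagonal (fun j => (Real.sqrt (Ddiag j))⁻¹) with hDi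
  have hsq : ∀ j, Real.sqrt (Ddiag j) ≠ 0 := fun j => ne_of_gt (Real.sqrt_pos.mpr (hD j))
  have hDiDh : Di * Dh = 1 := by
    rw [hDi, hDh, Matrix.diagonal_mul_diagonal, ← Matrix.diagonal_one]
    exact congrArg Matrix.diagonal (funext fun j => inv_mul_cancel₀ (hsq j))
  -- (X i * V)ᵀ * (X i * V) = D
  have hXV : ∀ i, (X i * V)ᵀ * (X i * V) = Matrix.diagonal Ddiag := by
    intro i
    calc (X i * V)ᵀ * (X i * V)
        = Vᵀ * ((X i)ᵀ * (X i * V)) := by rw [Matrix.transpose_mul, Matrix.mul_assoc]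
      _ = Vᵀ * (((X i)ᵀ * X i) * V) := by rw [Matrix.mul_assoc]
      _ = Vᵀ * (V * Matrix.diagonal Ddiag * Vᵀ * V) := by rw [hS i, hSdec]
      _ = Vᵀ * (V * Matrix.diagonal Ddiag * (Vᵀ * V)) := by rw [Matrix.mul_assoc]
      _ = Vᵀ * (V * Matrix.diagonal Ddiag) := by rw [hV, Matrix.mul_one]
      _ = (Vᵀ * V) * Matrix.diagonal Ddiag := by rw [Matrix.mul_assoc]
      _ = Matrix.diagonal Ddiag := by rw [hV, Matrix.one_mul]
  have hUU : ∀ i, (U i)ᵀ * U i = 1 := by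
    intro i
    have hUi : U i = (X i * V) * Di := hU i
    calc (U i)ᵀ * U i
        = ((X i * V) * Di)ᵀ * ((X i * V) * Di) := by rw [hUi]
      _ = Diᵀ * (X i * V)ᵀ * ((X i * V) * Di) := by rw [Matrix.transpose_mul]
      _ = Diᵀ * ((X i * V)ᵀ * ((X i * V) * Di)) := by rw [Matrix.mul_assoc]
      _ = Diᵀ * (((X i * V)ᵀ * (X i * V)) * Di) := by
          rw [← Matrix.mul_assoc ((X i * V)ᵀ) (X i * V) Di]
      _ = Di * (Matrix.diagonal Ddiag * Di) := by
          rw [hXV i, hDi, Matrix.diagonal_transpose]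
      _ = 1 := by
          rw [hDi, Matrix.diagonal_mul_diagonal, Matrix.diagonal_mul_diagonal,
            ← Matrix.diagonal_one]
          refine congrArg Matrix.diagonal (funext fun j => ?_)
          have hms : Real.sqrt (Ddiag j) * Real.sqrt (Ddiag j) = Ddiag j :=
            Real.mul_self_sqrt (hD j).le
          rw [← hms]
          field_simp
          rw [Real.sqrt_sq (Real.sqrt_nonneg _)]
          exact div_self (pow_ne_zero 2 (hsq j))
  have hXB' : ∀ i (B' : Matrix (Fin d) (Fin r) ℝ),
      X i * B' = U i * (Dh * (Vᵀ * B')) := by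
    intro i B'
    have h1 : U i * Dh = X i * V := by
      rw [hU i, Matrix.mul_assoc, hDiDh, Matrix.mul_one]
    calc X i * B'
        = X i * ((V * Vᵀ) * B') := by rw [hVVt, Matrix.one_mul]
      _ = (X i * V) * (Vᵀ * B') := by rw [Matrix.mul_assoc, Matrix.mul_assoc]
      _ = (U i * Dh) * (Vᵀ * B') := by rw [h1]
      _ = U i * (Dh * (Vᵀ * B')) := by rw [Matrix.mul_assoc]
  have hXBC : ∀ i, X i * B = U i * C := by
    intro i
    rw [hB, ← Matrix.mul_assoc, ← Matrix.mul_assoc, ← hU i]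
  set b : ∀ i : Fin k, Fin d → ℝ := fun i => (U i)ᵀ.mulVec (y i) with hb
  set A : Fin k → Fin r → ℝ := fun i => Cᵀ.mulVec (b i) with hA
  have hvn : ∀ (n : ℕ) (v : Fin n → ℝ), vnorm v ^ 2 = ∑ j, v j ^ 2 := by
    intro n v
    rw [vnorm, Real.sq_sqrt]
    exact Finset.sum_nonneg fun j _ => sq_nonneg _
  have htrace : ∀ C' : Matrix (Fin d) (Fin r) ℝ,
      (C'ᵀ * M * C').trace
        = ∑ i, α i * ((C'ᵀ.mulVec (b i)) ⬝ᵥ (C'ᵀ.mulVec (b i))) := by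
    intro C'
    rw [hM, Matrix.mul_sum, Matrix.sum_mul, Matrix.trace_sum]
    refine Finset.sum_congr rfl fun i _ => ?_
    rw [Matrix.mul_smul, Matrix.smul_mul, Matrix.trace_smul, smul_eq_mul]
    congr 1
    rw [conj_vecMulVec (U i) (y i), conj_vecMulVec C' (b i), trace_vecMulVec']
  -- value at the candidate optimum
  have hLHS : (∑ i, α i * vnorm (fun j => (X i).mulVec (B.mulVec (A i)) j - y i j) ^ 2)
      = (∑ i, α i * (∑ p, (y i p) ^ 2)) - (Cᵀ * M * C).trace := by
    rw [htrace C, ← Finset.sum_sub_distrib]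
    refine Finset.sum_congr rfl fun i _ => ?_
    rw [hvn]
    have hx : (X i).mulVec (B.mulVec (A i)) = (U i).mulVec (C.mulVec (A i)) := by
      calc (X i).mulVec (B.mulVec (A i))
          = (X i * B).mulVec (A i) := Matrix.mulVec_mulVec (A i) (X i) B
        _ = (U i * C).mulVec (A i) := by rw [hXBC i]
        _ = (U i).mulVec (C.mulVec (A i)) := (Matrix.mulVec_mulVec (A i) (U i) C).symm
    rw [hx, sq_expand (U i) (hUU i) (y i) (C.mulVec (A i))]
    rw [orth_dot C hC (A i), mulVec_dot_right C (A i) (b i)]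
    have hAb : A i = Cᵀ.mulVec (b i) := rfl
    rw [← hAb]
    ring
  refine ⟨A, ?_⟩
  intro B' A'
  obtain ⟨C2, hC2o, hC2p⟩ := exists_proj d r hrd (Dh * (Vᵀ * B'))
  have hRHS : (∑ i, α i * (∑ p, (y i p) ^ 2)) - (C2ᵀ * M * C2).trace
      ≤ ∑ i, α i * vnorm (fun j => (X i).mulVec (B'.mulVec (A' i)) j - y i j) ^ 2 := by
    rw [htrace C2, ← Finset.sum_sub_distrib]
    refine Finset.sum_le_sum fun i _ => ?_
    rw [hvn]
    set G : Matrix (Fin d) (Fin r) ℝ := Dh * (Vᵀ * B') with hG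
    have hx : (X i).mulVec (B'.mulVec (A' i)) = (U i).mulVec (G.mulVec (A' i)) := by
      calc (X i).mulVec (B'.mulVec (A' i))
          = (X i * B').mulVec (A' i) := Matrix.mulVec_mulVec (A' i) (X i) B'
        _ = (U i * G).mulVec (A' i) := by rw [hXB' i B', hG]
        _ = (U i).mulVec (G.mulVec (A' i)) := (Matrix.mulVec_mulVec (A' i) (U i) G).symm
    rw [hx, sq_expand (U i) (hUU i) (y i) (G.mulVec (A' i))]
    set u : Fin r → ℝ := (C2ᵀ * G).mulVec (A' i) with hu
    have hw : G.mulVec (A' i) = C2.mulVec u := by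
      calc G.mulVec (A' i)
          = (C2 * (C2ᵀ * G)).mulVec (A' i) := by rw [hC2p]
        _ = C2.mulVec u := (Matrix.mulVec_mulVec (A' i) C2 (C2ᵀ * G)).symm
    set c : Fin r → ℝ := C2ᵀ.mulVec (b i) with hc
    rw [hw, orth_dot C2 hC2o u, mulVec_dot_right C2 u (b i)]
    have hcb : c = C2ᵀ.mulVec (b i) := rfl
    rw [← hcb]
    have hkey : (0:ℝ) ≤ c ⬝ᵥ c - 2 * (u ⬝ᵥ c) + u ⬝ᵥ u := sum_sq_nonneg_dot u c
    have hαi : (0:ℝ) ≤ α i := (hα i).le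
    nlinarith [mul_le_mul_of_nonneg_left hkey hαi]
  calc (∑ i, α i * vnorm (fun j => (X i).mulVec (B.mulVec (A i)) j - y i j) ^ 2)
      = (∑ i, α i * (∑ p, (y i p) ^ 2)) - (Cᵀ * M * C).trace := hLHS
    _ ≤ (∑ i, α i * (∑ p, (y i p) ^ 2)) - (C2ᵀ * M * C2).trace := by
        have := hCmax C2 hC2o
        linarith
    _ ≤ _ := hRHS
end
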